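/- Let H be a finite simple graph whose vertices carry label sets from {1,...,k}, let i ≠ j be labels such that no vertex of H carries both i and j, and let H' = η_{i,j}(H) be the graph obtained from H by adding an edge between every vertex carrying label i and every vertex carrying label j (labels unchanged). Then (1) a set S of vertices is independent in H' if and only if S is independent in H and S does not contain both a vertex carrying label i and a vertex carrying label j; and (2) the [k]-labeled independent set polynomial of H' equals the sum of those monomials of the [k]-labeled independent set polynomial of H that are not divisible by x_i·x_j. -/

import Mathlib

open MvPolynomial

/-- A finite set `S` of vertices is independent in `G`. -/
def IndepF {α : Type*} (G : SimpleGraph α) (S : Finset α) : Prop :=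
  ∀ u ∈ S, ∀ v ∈ S, ¬ G.Adj u v

open Classical in
/-- The `[k]`-labeled independent set polynomial of a labeled graph `(G, L)`:
`P(x, x₁, …, x_k) = Σ_S x^|S| ∏_{j ∈ ⋃_{v ∈ S} L v} x_j`,
where `S` ranges over the independent sets of `G` (including `∅`).
The variable `none` plays the role of `x`, and `some j` the role of `x_j`. -/
noncomputable def labIndepPoly {α : Type*} [Fintype α] {k : ℕ} (G : SimpleGraph α)
    (L : α → Finset (Fin k)) : MvPolynomial (Option (Fin k)) ℤ :=
  ∑ S ∈ Finset.univ.filter (fun S : Finset α => IndepF G S),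
    X none ^ S.card * ∏ j ∈ S.biUnion L, X (some j)

open Classical in
/-- The independent set polynomial `I(x) = Σ_i a_i x^i` of `G`, where `a_i` is the
number of independent sets of size `i` in `G` (with `a₀ = 1` for the empty set). -/
noncomputable def indepPoly {α : Type*} [Fintype α] (G : SimpleGraph α) : Polynomial ℤ :=
  ∑ i ∈ Finset.range (Fintype.card α + 1),
    Polynomial.C ((Finset.univ.filter
      (fun S : Finset α => IndepF G S ∧ S.card = i)).card : ℤ) * Polynomial.X ^ i

/-- `η_{i,j}(G)`: add an edge between every vertex carrying label `i` and every vertex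
carrying label `j` (labels unchanged). -/
def etaG {α : Type*} {k : ℕ} (G : SimpleGraph α) (L : α → Finset (Fin k))
    (i j : Fin k) : SimpleGraph α :=
  G ⊔ SimpleGraph.fromRel (fun u v => i ∈ L u ∧ j ∈ L v)


lemma prodX {σ τ : Type*} (T : Finset σ) (f : σ → τ) :
    (∏ l ∈ T, X (f l) : MvPolynomial τ ℤ) = monomial (∑ l ∈ T, Finsupp.single (f l) 1) 1 := by
  classical
  induction T using Finset.induction_on with
  | empty => simp
  | insert _ _ h ih =>
    rw [Finset.prod_insert h, Finset.sum_insert h, ih, X, monomial_mul, one_mul]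

lemma eApply {σ : Type*} [DecidableEq σ] (n : ℕ) (T : Finset σ) (m : σ) :
    ((Finsupp.single (none : Option σ) n + ∑ l ∈ T, Finsupp.single (some l) 1 : Option σ →₀ ℕ))
      (some m) = if m ∈ T then 1 else 0 := by
  classical
  rw [Finsupp.add_apply, Finsupp.single_apply, if_neg (by simp), Finsupp.finset_sum_apply]
  simp [Finsupp.single_apply]

open Classical in
/-- Adding the edges `η_{i,j}` (allowed since no vertex carries both
`i` and `j`): (1) a vertex set is independent in `η_{i,j}(H)` iff it is independent in
`H` and does not contain both a vertex carrying `i` and a vertex carrying `j`; and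
(2) the `[k]`-labeled independent set polynomial of `η_{i,j}(H)` is the sum of the
monomials of that of `H` that are not divisible by `x_i · x_j`. -/
theorem labIndepPoly_eta {α : Type*} [Fintype α] {k : ℕ} (H : SimpleGraph α)
    (L : α → Finset (Fin k)) (i j : Fin k) (hij : i ≠ j)
    (hsep : ∀ v : α, ¬(i ∈ L v ∧ j ∈ L v)) :
    (∀ S : Finset α, IndepF (etaG H L i j) S ↔
      (IndepF H S ∧ ¬((∃ u ∈ S, i ∈ L u) ∧ ∃ v ∈ S, j ∈ L v))) ∧
    labIndepPoly (etaG H L i j) L =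
      ∑ d ∈ (labIndepPoly H L).support.filter
          (fun d : Option (Fin k) →₀ ℕ => ¬(d (some i) ≠ 0 ∧ d (some j) ≠ 0)),
        MvPolynomial.monomial d ((labIndepPoly H L).coeff d) := by
  classical
  have hadj : ∀ u v : α, (etaG H L i j).Adj u v ↔
      H.Adj u v ∨ (u ≠ v ∧ ((i ∈ L u ∧ j ∈ L v) ∨ (i ∈ L v ∧ j ∈ L u))) := by
    intro u v
    simp [etaG, SimpleGraph.fromRel_adj]
  have part1 : ∀ S : Finset α, IndepF (etaG H L i j) S ↔
      (IndepF H S ∧ ¬((∃ u ∈ S, i ∈ L u) ∧ ∃ v ∈ S, j ∈ L v)) := by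
    intro S
    constructor
    · intro h
      refine ⟨fun u hu v hv a => h u hu v hv ((hadj u v).mpr (Or.inl a)), ?_⟩
      rintro ⟨⟨u, hu, hiu⟩, ⟨v, hv, hjv⟩⟩
      have hne : u ≠ v := by rintro rfl; exact hsep u ⟨hiu, hjv⟩
      exact h u hu v hv ((hadj u v).mpr (Or.inr ⟨hne, Or.inl ⟨hiu, hjv⟩⟩))
    · rintro ⟨hI, hnb⟩ u hu v hv adj
      rcases (hadj u v).mp adj with a | ⟨hne, h' | h'⟩
      · exact hI u hu v hv a
      · exact hnb ⟨⟨u, hu, h'.1⟩, ⟨v, hv, h'.2⟩⟩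
      · exact hnb ⟨⟨v, hv, h'.1⟩, ⟨u, hu, h'.2⟩⟩
  refine ⟨part1, ?_⟩
  set e : Finset α → (Option (Fin k) →₀ ℕ) := fun S =>
    Finsupp.single none S.card + ∑ l ∈ S.biUnion L, Finsupp.single (some l) 1 with he
  have hterm : ∀ S : Finset α,
      (X none ^ S.card * ∏ l ∈ S.biUnion L, X (some l) : MvPolynomial (Option (Fin k)) ℤ)
        = monomial (e S) 1 := by
    intro S
    rw [prodX _ _, X_pow_eq_monomial, monomial_mul, one_mul, he]
  have h1 : ∀ (S : Finset α) (m : Fin k), ((e S) (some m) ≠ 0) ↔ ∃ u ∈ S, m ∈ L u := by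
    intro S m
    have hcomp : (e S) (some m) = if m ∈ S.biUnion L then 1 else 0 :=
      eApply S.card (S.biUnion L) m
    rw [hcomp]
    by_cases hm : m ∈ S.biUnion L
    · simpa [hm] using Finset.mem_biUnion.mp hm
    · simp only [hm, if_false, ne_eq, not_true_eq_false, false_iff]
      push_neg
      intro u hu hmu
      exact absurd (Finset.mem_biUnion.mpr ⟨u, hu, hmu⟩) hm
  have hq : ∀ S : Finset α, (¬((e S) (some i) ≠ 0 ∧ (e S) (some j) ≠ 0)) ↔
      ¬((∃ u ∈ S, i ∈ L u) ∧ ∃ v ∈ S, j ∈ L v) :=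
    fun S => not_congr (and_congr (h1 S i) (h1 S j))
  set F := Finset.univ.filter (fun S : Finset α => IndepF H S) with hF
  set q : Finset α → Prop := fun S => ¬((∃ u ∈ S, i ∈ L u) ∧ ∃ v ∈ S, j ∈ L v) with hqdef
  set A : MvPolynomial (Option (Fin k)) ℤ := ∑ S ∈ F.filter q, monomial (e S) 1 with hA
  set B : MvPolynomial (Option (Fin k)) ℤ :=
    ∑ S ∈ F.filter (fun S => ¬ q S), monomial (e S) 1 with hB
  have hsets : Finset.univ.filter (fun S : Finset α => IndepF (etaG H L i j) S)
      = F.filter q := by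
    ext S
    simp only [Finset.mem_filter, Finset.mem_univ, true_and, hF, hqdef, part1 S]
  have hLHS : labIndepPoly (etaG H L i j) L = A := by
    rw [labIndepPoly, hsets, hA]
    exact Finset.sum_congr rfl fun S _ => hterm S
  have hP : labIndepPoly H L = A + B := by
    have h2 : labIndepPoly H L = ∑ S ∈ F, monomial (e S) 1 := by
      rw [labIndepPoly]
      exact Finset.sum_congr rfl fun S _ => hterm S
    rw [h2, hA, hB]
    exact (Finset.sum_filter_add_sum_filter_not F q _).symm
  have hBcoeff : ∀ d : Option (Fin k) →₀ ℕ,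
      ¬(d (some i) ≠ 0 ∧ d (some j) ≠ 0) → coeff d B = 0 := by
    intro d hd
    rw [hB, coeff_sum]
    refine Finset.sum_eq_zero fun S hS => ?_
    rw [coeff_monomial, if_neg]
    intro hEq
    have hnqS : ¬ q S := (Finset.mem_filter.mp hS).2
    have hboth : (e S) (some i) ≠ 0 ∧ (e S) (some j) ≠ 0 := by
      by_contra hc
      exact hnqS ((hq S).mp hc)
    exact hd (hEq ▸ hboth)
  have hAcoeff : ∀ d : Option (Fin k) →₀ ℕ,
      coeff d A ≠ 0 → ¬(d (some i) ≠ 0 ∧ d (some j) ≠ 0) := by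
    intro d hd
    rw [hA, coeff_sum] at hd
    obtain ⟨S, hS, hne⟩ := Finset.exists_ne_zero_of_sum_ne_zero hd
    rw [coeff_monomial] at hne
    by_cases hEq : e S = d
    · have hqS : q S := (Finset.mem_filter.mp hS).2
      have := (hq S).mpr hqS
      rwa [hEq] at this
    · exact absurd (if_neg hEq) hne
  have hPA : ∀ d : Option (Fin k) →₀ ℕ, ¬(d (some i) ≠ 0 ∧ d (some j) ≠ 0) →
      coeff d (labIndepPoly H L) = coeff d A := by
    intro d hd
    rw [hP, coeff_add, hBcoeff d hd, add_zero]
  have hsupp : (labIndepPoly H L).support.filter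
      (fun d : Option (Fin k) →₀ ℕ => ¬(d (some i) ≠ 0 ∧ d (some j) ≠ 0)) = A.support := by
    ext d
    simp only [Finset.mem_filter, mem_support_iff]
    constructor
    · rintro ⟨hne, hd⟩
      rw [hPA d hd] at hne
      exact hne
    · intro hAne
      have hd := hAcoeff d hAne
      refine ⟨?_, hd⟩
      rw [hPA d hd]
      exact hAne
  calc labIndepPoly (etaG H L i j) L = A := hLHS
    _ = ∑ d ∈ A.support, monomial d (coeff d A) := (support_sum_monomial_coeff A).symm
    _ = ∑ d ∈ (labIndepPoly H L).support.filter
          (fun d : Option (Fin k) →₀ ℕ => ¬(d (some i) ≠ 0 ∧ d (some j) ≠ 0)),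
        MvPolynomial.monomial d ((labIndepPoly H L).coeff d) := by
        rw [hsupp]
        exact Finset.sum_congr rfl fun d hd => by
          rw [hPA d (hAcoeff d (mem_support_iff.mp hd))]
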